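/- Let k be a field and Ψ : k → k[x], Ψ(a) = x − a. Then the cokernel of the k[x]-linear map Ψ_{k[x],k} : ⊕_{a∈k} k[x] → k[x] ⊕ (⊕_{a∈k} k[x]) (sending 1_a to (1, (x−a)·1_a)) is a flat k[x]-module; equivalently, Ψ_{k[x],k} is universally injective. -/

import Mathlib

open Polynomial TensorProduct


/-- The `R`-linear map `Ψ_{R,S} : ⊕_S R → R ⊕ (⊕_S R)` associated to a function `Ψ : S → R`,
sending the basis vector `1_s` to `(1, Ψ s • 1_s)`. -/
noncomputable def psiMap (R : Type*) [CommRing R] (S : Type*) (Ψ : S → R) :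
    (S →₀ R) →ₗ[R] R × (S →₀ R) :=
  Finsupp.lsum R fun s => LinearMap.prod LinearMap.id ((Ψ s) • Finsupp.lsingle s)

theorem psiMap_fst {R : Type*} [CommRing R] {S : Type*} (Ψ : S → R) (c : S →₀ R) :
    (psiMap R S Ψ c).1 = c.sum fun _ t => t := by
  simp [psiMap, Finsupp.lsum_apply, Finsupp.sum, Prod.fst_sum]

theorem psiMap_snd {R : Type*} [CommRing R] {S : Type*} [DecidableEq S] (Ψ : S → R) (c : S →₀ R) (a : S) :
    (psiMap R S Ψ c).2 a = Ψ a * c a := by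
  classical
  simp only [psiMap, Finsupp.lsum_apply, Finsupp.sum, LinearMap.prod_apply, Function.prod,
    LinearMap.id_coe, id_eq, LinearMap.smul_apply, Finsupp.lsingle_apply, Prod.snd_sum,
    Finsupp.finset_sum_apply, Finsupp.smul_apply, Finsupp.single_apply, smul_eq_mul, mul_ite, mul_zero]
  rw [Finset.sum_ite_eq' c.support a (fun s => Ψ s * c s)]
  by_cases h : a ∈ c.support
  · simp [h]
  · simp [h, Finsupp.notMem_support_iff.mp h]


theorem flat_of_smul_injective {R : Type*} [CommRing R] [IsDomain R] [IsPrincipalIdealRing R]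
    {M : Type*} [AddCommGroup M] [Module R M]
    (h : ∀ p : R, p ≠ 0 → Function.Injective fun m : M => p • m) : Module.Flat R M := by
  rw [Module.Flat.iff_rTensor_injective']
  intro I
  obtain ⟨p, hp⟩ := (IsPrincipalIdealRing.principal I).principal
  by_cases hp0 : p = 0
  · subst hp0
    haveI : Subsingleton I := by
      rw [hp, Submodule.span_zero_singleton]
      infer_instance
    intro x y _
    exact Subsingleton.elim x y
  · have hinj : Function.Injective (LinearMap.toSpanSingleton R R p) := by
      intro a b hab
      simp only [LinearMap.toSpanSingleton_apply, smul_eq_mul] at hab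
      exact mul_right_cancel₀ hp0 hab
    have hrange : LinearMap.range (LinearMap.toSpanSingleton R R p) = I := by
      rw [← LinearMap.span_singleton_eq_range, hp]
    let e : R ≃ₗ[R] I :=
      (LinearEquiv.ofInjective _ hinj).trans (LinearEquiv.ofEq _ _ hrange)
    have hce : I.subtype ∘ₗ (e : R →ₗ[R] I) = LinearMap.toSpanSingleton R R p := by
      apply LinearMap.ext
      intro r
      rfl
    have hsmul : ∀ z : R ⊗[R] M,
        (TensorProduct.lid R M) (LinearMap.rTensor M (LinearMap.toSpanSingleton R R p) z)
          = p • (TensorProduct.lid R M z) := by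
      intro z
      induction z using TensorProduct.induction_on with
      | zero => simp
      | tmul r m => simp [TensorProduct.lid_tmul, smul_smul, mul_comm]
      | add x y hx hy => simp [hx, hy]
    have h2 : Function.Injective (LinearMap.rTensor M (LinearMap.toSpanSingleton R R p)) := by
      intro x y hxy
      have := congrArg (TensorProduct.lid R M) hxy
      rw [hsmul, hsmul] at this
      exact (TensorProduct.lid R M).injective (h p hp0 this)
    set E := LinearEquiv.rTensor M e with hE
    have hEcoe : (E : R ⊗[R] M →ₗ[R] I ⊗[R] M) = LinearMap.rTensor M (e : R →ₗ[R] I) := by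
      apply TensorProduct.ext'
      intro r m
      rfl
    intro x y hxy
    obtain ⟨x, rfl⟩ := E.surjective x
    obtain ⟨y, rfl⟩ := E.surjective y
    have key : ∀ z, LinearMap.rTensor M I.subtype (E z)
        = LinearMap.rTensor M (LinearMap.toSpanSingleton R R p) z := by
      intro z
      rw [← hce, LinearMap.rTensor_comp, LinearMap.comp_apply, ← hEcoe]
      rfl
    rw [key, key] at hxy
    exact congrArg E (h2 hxy)


theorem key_div {k : Type*} [Field k] (p : k[X]) (hp : p ≠ 0) (f : k[X]) (g : k →₀ k[X])
    (c : k →₀ k[X]) (h1 : (c.sum fun _ t => t) = p * f)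
    (h2 : ∀ a, (X - C a) * c a = p * g a) :
    ∃ d : k →₀ k[X], (d.sum fun _ t => t) = f ∧ ∀ a, (X - C a) * d a = g a := by
  classical
  set S : Finset k := c.support ∪ g.support with hS
  set P : k[X] := ∏ b ∈ S, (X - C b) with hPdef
  have hP : P ≠ 0 := by
    apply Finset.prod_ne_zero_iff.mpr
    intro b _
    exact X_sub_C_ne_zero b
  have hcS : ∀ a ∈ S, P = (X - C a) * ∏ b ∈ S.erase a, (X - C b) := by
    intro a ha
    rw [hPdef, ← Finset.mul_prod_erase S _ ha]
  -- key equation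
  have hE : f * P = ∑ a ∈ S, g a * ∏ b ∈ S.erase a, (X - C b) := by
    apply mul_left_cancel₀ hp
    have hc : (c.sum fun _ t => t) = ∑ a ∈ S, c a :=
      Finsupp.sum_of_support_subset c (Finset.subset_union_left) _ (fun _ _ => rfl)
    calc p * (f * P) = ((c.sum fun _ t => t)) * P := by rw [h1]; ring
      _ = (∑ a ∈ S, c a) * P := by rw [hc]
      _ = ∑ a ∈ S, c a * P := by rw [Finset.sum_mul]
      _ = ∑ a ∈ S, (p * g a) * ∏ b ∈ S.erase a, (X - C b) := by
          apply Finset.sum_congr rfl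
          intro a ha
          rw [hcS a ha, ← mul_assoc, mul_comm (c a) (X - C a), h2 a]
      _ = p * ∑ a ∈ S, g a * ∏ b ∈ S.erase a, (X - C b) := by
          rw [Finset.mul_sum]; apply Finset.sum_congr rfl; intros; ring
  have hdvd : ∀ a ∈ S, (X - C a) ∣ g a := by
    intro a ha
    rw [dvd_iff_isRoot]
    have := congrArg (Polynomial.eval a) hE
    simp only [eval_mul, eval_prod, eval_sub, eval_X, eval_C, eval_finset_sum] at this
    have hPa : eval a P = 0 := by
      rw [hPdef, eval_prod]
      exact Finset.prod_eq_zero ha (by simp)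
    rw [hPa, mul_zero] at this
    rw [Finset.sum_eq_single a (fun b hb hba => ?_) (fun h => absurd ha h)] at this
    · have hne : (∏ b ∈ S.erase a, (a - b)) ≠ 0 := by
        apply Finset.prod_ne_zero_iff.mpr
        intro b hb
        exact sub_ne_zero.mpr (Finset.ne_of_mem_erase hb).symm
      exact (mul_eq_zero.mp this.symm).resolve_right hne
    · rw [Finset.prod_eq_zero (Finset.mem_erase.mpr ⟨Ne.symm hba, ha⟩) (sub_self a), mul_zero]
  -- construct d
  set dfun : k → k[X] := fun a => g a /ₘ (X - C a) with hdfun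
  have hd0 : ∀ a, g a = 0 → dfun a = 0 := by
    intro a ha; rw [hdfun]; simp [ha]
  set d : k →₀ k[X] := Finsupp.onFinset g.support dfun
    (fun a ha => by by_contra h0; exact ha (hd0 a (Finsupp.notMem_support_iff.mp h0))) with hd
  have hdmul : ∀ a, (X - C a) * d a = g a := by
    intro a
    by_cases ha : g a = 0
    · rw [ha]
      have : d a = 0 := hd0 a ha
      rw [this, mul_zero]
    · have haS : a ∈ S := Finset.mem_union_right _ (Finsupp.mem_support_iff.mpr ha)
      obtain ⟨q, hq⟩ := hdvd a haS
      have : d a = q := by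
        show dfun a = q
        rw [hdfun]
        simp only [hq]
        exact mul_divByMonic_cancel_left q (monic_X_sub_C a)
      rw [this, ← hq]
  refine ⟨d, ?_, hdmul⟩
  have hds : (d.sum fun _ t => t) = ∑ a ∈ S, d a := by
    apply Finsupp.sum_of_support_subset d ?_ _ (fun _ _ => rfl)
    intro a ha
    exact Finset.mem_union_right _ (Finsupp.support_onFinset_subset ha)
  rw [hds]
  apply mul_right_cancel₀ hP
  rw [Finset.sum_mul, hE]
  apply Finset.sum_congr rfl
  intro a ha
  rw [hcS a ha, ← hdmul a]
  ring

/-- For a field `k` and `Ψ : k → k[x]`, `Ψ a = x - a`, the cokernel of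
`Ψ_{k[x],k} : ⊕_{a ∈ k} k[x] → k[x] ⊕ (⊕_{a ∈ k} k[x])` is a flat `k[x]`-module
(equivalently, `Ψ_{k[x],k}` is universally injective). -/
theorem stmt4 (k : Type*) [Field k] :
    Module.Flat (Polynomial k)
      ((Polynomial k × (k →₀ Polynomial k)) ⧸
        LinearMap.range (psiMap (Polynomial k) k (fun a => X - C a))) := by
  classical
  set N := LinearMap.range (psiMap (Polynomial k) k (fun a => X - C a)) with hN
  apply flat_of_smul_injective
  intro p hp
  have hker : ∀ m : (Polynomial k × (k →₀ Polynomial k)) ⧸ N, p • m = 0 → m = 0 := by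
    intro m hm
    obtain ⟨⟨u, v⟩, rfl⟩ := Submodule.Quotient.mk_surjective N m
    rw [← Submodule.Quotient.mk_smul, Submodule.Quotient.mk_eq_zero] at hm
    obtain ⟨c, hc⟩ := hm
    have h1 : (c.sum fun _ t => t) = p * u := by
      have := congrArg Prod.fst hc
      rw [psiMap_fst] at this
      simpa [smul_eq_mul] using this
    have h2 : ∀ a, (X - C a) * c a = p * v a := by
      intro a
      have := congrArg (fun w : Polynomial k × (k →₀ Polynomial k) => w.2 a) hc
      rw [psiMap_snd] at this
      simpa [Finsupp.smul_apply, smul_eq_mul] using this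
    obtain ⟨d, hd1, hd2⟩ := key_div p hp u v c h1 h2
    rw [Submodule.Quotient.mk_eq_zero]
    refine ⟨d, ?_⟩
    apply Prod.ext
    · rw [psiMap_fst]; exact hd1
    · apply Finsupp.ext
      intro a
      rw [psiMap_snd]
      exact hd2 a
  intro x y hxy
  have : p • (x - y) = 0 := by
    rw [smul_sub]
    simp only at hxy
    rw [hxy, sub_self]
  have := hker _ this
  exact sub_eq_zero.mp this
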